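/- Fix d ≥ 1 and let (a_m) be the sequence of the main construction. For every m = 3dn + r > 3d + 2 with r ≡ 1 (mod 3), assuming all earlier terms take their claimed values, a_{m−a_{m−1}} + a_{m−a_{m−2}} = 3d (with a_j = 0 for j ≤ 0). -/

import Mathlib

/-- Binomial coefficient `C(x, j)` extended polynomially in the (integer) upper argument. -/
def pbinom (x : ℤ) (j : ℕ) : ℤ := (∏ i ∈ Finset.range j, (x - i)) / (Nat.factorial j : ℤ)

/-- `p_{d,k}(n) = 3d·C(n+k, 1+k) + Σ_{i=1}^{k} (3i+2)·C(n-1+k-i, k-i)`. -/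
def hp (d k n : ℤ) : ℤ :=
  3 * d * pbinom (n + k) (1 + k).toNat
    + ∑ i ∈ Finset.Icc 1 k.toNat, (3 * (i : ℤ) + 2) * pbinom (n - 1 + k - (i : ℤ)) (k.toNat - i)

/-- The sequence of the main construction, with `a j = 0` for `j ≤ 0`. -/
def hseq (d : ℤ) (m : ℤ) : ℤ :=
  if m ≤ 0 then 0
  else if m = 1 then 3 * d - 2
  else if m = 2 then 0
  else
    if (m % (3 * d)) % 3 = 0 then hp d ((m % (3 * d)) / 3) (m / (3 * d))
    else if (m % (3 * d)) % 3 = 1 then 3 * d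
    else if m % (3 * d) = 3 * d - 1 then 2
    else 3

lemma pbinom_nat (x j : ℕ) : pbinom (x : ℤ) j = x.choose j := by
  unfold pbinom
  by_cases h : j ≤ x
  · have hp : (∏ i ∈ Finset.range j, ((x : ℤ) - i)) = ((x.descFactorial j : ℕ) : ℤ) := by
      rw [Nat.descFactorial_eq_prod_range]
      push_cast
      refine Finset.prod_congr rfl fun i hi => ?_
      have : i ≤ x := le_trans (le_of_lt (Finset.mem_range.mp hi)) h
      omega
    rw [hp, Nat.descFactorial_eq_factorial_mul_choose]
    push_cast
    rw [mul_comm]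
    exact Int.mul_ediv_cancel _ (by exact_mod_cast Nat.factorial_ne_zero j)
  · have hx : x < j := by omega
    have hz : (∏ i ∈ Finset.range j, ((x : ℤ) - i)) = 0 := by
      apply Finset.prod_eq_zero (Finset.mem_range.mpr hx)
      simp
    rw [hz, Nat.choose_eq_zero_of_lt hx]
    simp

lemma pbinom_eq_of_nonneg {x : ℤ} (hx : 0 ≤ x) (j : ℕ) :
    pbinom x j = (x.toNat.choose j : ℤ) := by
  rw [← pbinom_nat]; congr 1; omega

lemma pbinom_nonneg {x : ℤ} (hx : 0 ≤ x) (j : ℕ) : 0 ≤ pbinom x j := by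
  rw [pbinom_eq_of_nonneg hx]; positivity

lemma pbinom_zero (x : ℤ) : pbinom x 0 = 1 := by simp [pbinom]

lemma pbinom_one (x : ℤ) : pbinom x 1 = x := by simp [pbinom]

lemma choose_ge (n k : ℕ) : n ≤ (n + k).choose (k + 1) := by
  induction k with
  | zero => simp
  | succ k ih =>
    have : n + (k+1) = (n + k) + 1 := by omega
    rw [this, Nat.choose_succ_succ]
    omega

lemma hp_zero (d n : ℤ) : hp d 0 n = 3 * d * n := by
  unfold hp
  norm_num [pbinom_one]

lemma hp_ge (d k n : ℤ) (hd : 0 ≤ d) (hk : 1 ≤ k) (hn : 1 ≤ n) :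
    3 * d * n + 3 * k + 2 ≤ hp d k n := by
  unfold hp
  have hK : (k.toNat : ℤ) = k := by omega
  have h1 : 3 * d * n ≤ 3 * d * pbinom (n + k) (1 + k).toNat := by
    have he : (1 + k).toNat = k.toNat + 1 := by omega
    have hx : pbinom (n + k) (1 + k).toNat = ((n.toNat + k.toNat).choose (k.toNat + 1) : ℤ) := by
      rw [he, pbinom_eq_of_nonneg (by omega)]
      congr 2
      omega
    have hc := choose_ge n.toNat k.toNat
    have h2 : (n : ℤ) ≤ pbinom (n + k) (1 + k).toNat := by
      rw [hx]
      exact le_trans (by omega : (n:ℤ) ≤ (n.toNat:ℤ)) (by exact_mod_cast hc)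
    exact mul_le_mul_of_nonneg_left h2 (by omega)
  have h3 : 3 * k + 2 ≤ ∑ i ∈ Finset.Icc 1 k.toNat, (3 * (i : ℤ) + 2) * pbinom (n - 1 + k - (i : ℤ)) (k.toNat - i) := by
    have hmem : k.toNat ∈ Finset.Icc 1 k.toNat := Finset.mem_Icc.mpr ⟨by omega, le_refl _⟩
    have hterm : (fun (i : ℕ) => (3 * (i : ℤ) + 2) * pbinom (n - 1 + k - (i : ℤ)) (k.toNat - i)) k.toNat = 3 * k + 2 := by
      simp only [Nat.sub_self, pbinom_zero, hK]
      ring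
    have hs := Finset.single_le_sum (f := fun (i : ℕ) => (3 * (i : ℤ) + 2) * pbinom (n - 1 + k - (i : ℤ)) (k.toNat - i))
      (fun i hi => ?_) hmem
    · beta_reduce at hterm
      rw [hterm] at hs
      exact hs
    · rcases Finset.mem_Icc.mp hi with ⟨hi1, hi2⟩
      apply mul_nonneg (by positivity)
      apply pbinom_nonneg
      have : (i : ℤ) ≤ k := by omega
      omega
  linarith

lemma my_emod (b n r : ℤ) (hb : 0 < b) (h0 : 0 ≤ r) (h1 : r < b) : (b * n + r) % b = r := by
  rw [add_comm, Int.add_mul_emod_self_left, Int.emod_eq_of_lt h0 h1]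

lemma my_ediv (b n r : ℤ) (hb : 0 < b) (h0 : 0 ≤ r) (h1 : r < b) : (b * n + r) / b = n := by
  rw [add_comm, Int.add_mul_ediv_left _ _ (by omega : b ≠ 0), Int.ediv_eq_zero_of_lt h0 h1]
  ring

lemma hseq_nonpos (d x : ℤ) (hx : x ≤ 0) : hseq d x = 0 := by
  unfold hseq; rw [if_pos hx]

lemma hseq_eval (d x n' r' : ℤ) (hd : 1 ≤ d) (hx : 2 < x) (hx' : x = 3 * d * n' + r')
    (h0 : 0 ≤ r') (h1 : r' < 3 * d) :
    hseq d x = if r' % 3 = 0 then hp d (r' / 3) n'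
      else if r' % 3 = 1 then 3 * d
      else if r' = 3 * d - 1 then 2 else 3 := by
  have e1 : x % (3 * d) = r' := by rw [hx']; exact my_emod _ _ _ (by omega) h0 h1
  have e2 : x / (3 * d) = n' := by rw [hx']; exact my_ediv _ _ _ (by omega) h0 h1
  unfold hseq
  rw [if_neg (by omega), if_neg (by omega), if_neg (by omega), e1, e2]

theorem hseq_case_one (d : ℤ) (hd : 1 ≤ d) (n r m : ℤ) (hr0 : 0 ≤ r) (hr : r < 3 * d)
    (hm : m = 3 * d * n + r) (hbig : 3 * d + 2 < m) (h3 : r % 3 = 1) :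
    hseq d (m - hseq d (m - 1)) + hseq d (m - hseq d (m - 2)) = 3 * d := by
  obtain ⟨k, hk, hk0⟩ : ∃ k, r = 3 * k + 1 ∧ 0 ≤ k := ⟨r / 3, by omega, by omega⟩
  have hdn : 2 < 3 * d * n := by omega
  have hn : 1 ≤ n := by
    by_contra h
    push_neg at h
    have : 3 * d * n ≤ 3 * d * 0 := mul_le_mul_of_nonneg_left (by omega) (by omega)
    omega
  rcases eq_or_lt_of_le hk0 with hk1 | hk1
  · -- k = 0, r = 1
    have hk' : k = 0 := hk1.symm
    subst hk'
    have hn2 : 2 ≤ n := by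
      by_contra h
      push_neg at h
      have hn1 : n = 1 := by omega
      rw [hn1] at hm
      omega
    have A1 : hseq d (m - 1) = 3 * d * n := by
      rw [hseq_eval d (m - 1) n 0 hd (by omega) (by omega) (by omega) (by omega)]
      norm_num [hp_zero]
    have A2 : hseq d (m - 2) = 2 := by
      rw [hseq_eval d (m - 2) (n - 1) (3 * d - 1) hd (by omega) (by rw [hm, hk]; ring) (by omega) (by omega)]
      have : (3 * d - 1) % 3 = 2 := by omega
      rw [if_neg (by omega), if_neg (by omega), if_pos rfl]
    have B1 : m - hseq d (m - 1) = 1 := by rw [A1]; omega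
    have B2 : m - hseq d (m - 2) = m - 2 := by rw [A2]
    rw [B1, B2, A2]
    have : hseq d 1 = 3 * d - 2 := by norm_num [hseq]
    omega
  · -- k ≥ 1
    have hkd : k ≤ d - 1 := by omega
    have A1 : hseq d (m - 1) = hp d k n := by
      rw [hseq_eval d (m - 1) n (3 * k) hd (by omega) (by omega) (by omega) (by omega)]
      have h30 : (3 * k) % 3 = 0 := by omega
      have h33 : (3 * k) / 3 = k := by omega
      rw [if_pos h30, h33]
    have hge : 3 * d * n + 3 * k + 2 ≤ hp d k n := hp_ge d k n (by omega) (by omega) hn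
    have C1 : m - hseq d (m - 1) ≤ 0 := by rw [A1]; omega
    have D1 : hseq d (m - hseq d (m - 1)) = 0 := hseq_nonpos d _ C1
    have A2 : hseq d (m - 2) = 3 := by
      rw [hseq_eval d (m - 2) n (3 * k - 1) hd (by omega) (by omega) (by omega) (by omega)]
      rw [if_neg (by omega), if_neg (by omega), if_neg (by omega)]
    have A3 : hseq d (m - 3) = 3 * d := by
      rw [hseq_eval d (m - 3) n (3 * k - 2) hd (by omega) (by omega) (by omega) (by omega)]
      rw [if_neg (by omega), if_pos (by omega)]
    rw [D1, A2, A3]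
    omega
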